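/- arXiv:alg-geom/9712034 — 2 statements merged into one kernel-verified Lean document; each statement's English description precedes it below -/
import Mathlib

section
/- For every integer d ≥ 1 and every integer m ≥ 0, the identity Σ_{K ∈ S_d(m)} (dm)! / (∏_{i,j=1}^{d} k_{ij}!) = ((dm)!)^2 / (m!)^{2d} holds in the rational numbers; that is, the m-th coefficient of the period Ψ_F(z) obtained from the generalized mirror construction for a complete intersection of two hypersurfaces of degree d in P^{2d-1} equals the m-th coefficient ((dm)!)^2/(m!)^{2d} of the hypergeometric series Φ_0(z) associated to that complete intersection. -/
open Finset MvPolynomial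

private lemma aux_coeff_prod_X_pow (d : ℕ) (g k : Fin d → ℕ) :
    MvPolynomial.coeff (Finsupp.equivFunOnFinite.symm k)
      (∏ j : Fin d, (X j : MvPolynomial (Fin d) ℚ) ^ g j)
      = if g = k then 1 else 0 := by
  have hmon : (∏ j, (X j : MvPolynomial (Fin d) ℚ) ^ g j)
      = monomial (Finsupp.equivFunOnFinite.symm g) 1 := by
    rw [MvPolynomial.monomial_eq, map_one, one_mul, Finsupp.prod]
    rw [Finset.prod_subset (Finset.subset_univ ((Finsupp.equivFunOnFinite.symm g).support))
      (fun j _ hj => by rw [Finsupp.notMem_support_iff.1 hj, pow_zero])]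
    exact Finset.prod_congr rfl fun j _ => by
      rw [Finsupp.equivFunOnFinite_symm_apply_apply]
  rw [hmon, MvPolynomial.coeff_monomial]
  by_cases h : g = k
  · simp [h]
  · have : Finsupp.equivFunOnFinite.symm g ≠ Finsupp.equivFunOnFinite.symm k := by
      simpa using h
    simp [h, this.symm]

private lemma aux_coeff_sum_X_pow (d n : ℕ) (k : Fin d → ℕ) :
    MvPolynomial.coeff (Finsupp.equivFunOnFinite.symm k)
      ((∑ j : Fin d, (X j : MvPolynomial (Fin d) ℚ)) ^ n)
      = if ∑ j, k j = n then (Nat.multinomial univ k : ℚ) else 0 := by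
  rw [Finset.sum_pow_eq_sum_piAntidiag, MvPolynomial.coeff_sum]
  have key : ∀ g : Fin d → ℕ,
      MvPolynomial.coeff (Finsupp.equivFunOnFinite.symm k)
        ((Nat.multinomial univ g : MvPolynomial (Fin d) ℚ) * ∏ j, X j ^ g j)
      = if g = k then (Nat.multinomial univ g : ℚ) else 0 := by
    intro g
    push_cast [← MvPolynomial.C_eq_coe_nat]
    rw [MvPolynomial.coeff_C_mul, aux_coeff_prod_X_pow]
    by_cases h : g = k <;> simp [h]
  simp_rw [key]
  rw [Finset.sum_ite_eq' (piAntidiag univ n) k]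
  simp [mem_piAntidiag]

private lemma aux_star (d m : ℕ) (S : Finset (Fin d → Fin d → ℕ))
    (hS : ∀ K : Fin d → Fin d → ℕ,
      K ∈ S ↔ ((∀ i, ∑ j, K i j = m) ∧ (∀ j, ∑ i, K i j = m))) :
    ∑ K ∈ S, ∏ i : Fin d, (Nat.multinomial univ (K i) : ℚ)
      = (Nat.multinomial univ (fun _ : Fin d => m) : ℚ) := by
  have h1 := aux_coeff_sum_X_pow d (d * m) (fun _ => m)
  rw [if_pos (by simp [mul_comm])] at h1
  rw [← h1]
  have h2 : ((∑ j : Fin d, (X j : MvPolynomial (Fin d) ℚ)) ^ (d * m))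
      = ∏ _i : Fin d, (∑ j : Fin d, (X j : MvPolynomial (Fin d) ℚ)) ^ m := by
    rw [Finset.prod_const, card_univ, Fintype.card_fin, ← pow_mul, mul_comm]
  rw [h2]
  simp_rw [Finset.sum_pow_eq_sum_piAntidiag]
  rw [Finset.prod_univ_sum]
  rw [MvPolynomial.coeff_sum]
  have key : ∀ K : Fin d → (Fin d → ℕ),
      MvPolynomial.coeff (Finsupp.equivFunOnFinite.symm (fun _ => m))
        (∏ i : Fin d, ((Nat.multinomial univ (K i) : MvPolynomial (Fin d) ℚ)
          * ∏ j, X j ^ K i j))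
      = (∏ i, (Nat.multinomial univ (K i) : ℚ))
        * (if (fun j => ∑ i, K i j) = (fun _ => m) then 1 else 0) := by
    intro K
    rw [Finset.prod_mul_distrib]
    have hX : (∏ i : Fin d, ∏ j, (X j : MvPolynomial (Fin d) ℚ) ^ K i j)
        = ∏ j, X j ^ (∑ i, K i j) := by
      rw [Finset.prod_comm]
      exact Finset.prod_congr rfl fun j _ => Finset.prod_pow_eq_pow_sum _ _ _
    rw [hX]
    have hC : (∏ i : Fin d, (Nat.multinomial univ (K i) : MvPolynomial (Fin d) ℚ))
        = MvPolynomial.C (∏ i, (Nat.multinomial univ (K i) : ℚ)) := by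
      push_cast [← MvPolynomial.C_eq_coe_nat]
      rw [map_prod]
    rw [hC, MvPolynomial.coeff_C_mul, aux_coeff_prod_X_pow]
  rw [Finset.sum_congr rfl fun K _ => key K]
  simp_rw [mul_ite, mul_one, mul_zero]
  rw [Finset.sum_ite, Finset.sum_const_zero, add_zero]
  apply Finset.sum_congr _ (fun _ _ => rfl)
  ext K
  simp only [Finset.mem_filter, Fintype.mem_piFinset, mem_piAntidiag, hS, _root_.funext_iff]
  constructor
  · rintro ⟨h1, h2⟩
    exact ⟨fun i => ⟨h1 i, fun j _ => mem_univ j⟩, h2⟩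
  · rintro ⟨h1, h2⟩
    exact ⟨fun i => (h1 i).1, h2⟩

/-- For integers `d ≥ 1` and `m ≥ 0`, summing over the set `S_d(m)` of all
`d × d` matrices with nonnegative integer entries whose row sums and column sums all equal `m`,
one has `Σ_{K ∈ S_d(m)} (dm)! / ∏_{i,j} k_{ij}! = ((dm)!)^2 / (m!)^{2d}` in `ℚ`: the `m`-th
coefficient of the period `Ψ_F(z)` of the generalized mirror construction for a complete
intersection of two degree-`d` hypersurfaces in `ℙ^{2d-1}` equals the `m`-th coefficient
`((dm)!)^2 / (m!)^{2d}` of the hypergeometric series `Φ_0(z)`. -/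
theorem statement1 (d m : ℕ) (hd : 1 ≤ d)
    (S : Finset (Fin d → Fin d → ℕ))
    (hS : ∀ K : Fin d → Fin d → ℕ,
      K ∈ S ↔ ((∀ i, ∑ j, K i j = m) ∧ (∀ j, ∑ i, K i j = m))) :
    ∑ K ∈ S, ((d * m).factorial : ℚ) / ∏ i : Fin d, ∏ j : Fin d, ((K i j).factorial : ℚ)
      = ((d * m).factorial : ℚ) ^ 2 / (m.factorial : ℚ) ^ (2 * d) := by
  have hmfac : ((m.factorial : ℚ)) ≠ 0 := Nat.cast_ne_zero.2 m.factorial_ne_zero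
  -- multinomial of constant m
  have hconst : ((Nat.multinomial univ (fun _ : Fin d => m) : ℚ))
      = ((d * m).factorial : ℚ) / (m.factorial : ℚ) ^ d := by
    have := Nat.multinomial_spec (univ : Finset (Fin d)) (fun _ => m)
    rw [Finset.prod_const, Finset.sum_const, card_univ, Fintype.card_fin, smul_eq_mul] at this
    have : ((m.factorial : ℚ)) ^ d * (Nat.multinomial univ (fun _ : Fin d => m) : ℚ)
        = ((d * m).factorial : ℚ) := by exact_mod_cast congrArg (Nat.cast : ℕ → ℚ) this
    field_simp [← this]
    linarith
  -- rewrite each summand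
  have hterm : ∀ K ∈ S, ((d * m).factorial : ℚ)
        / ∏ i : Fin d, ∏ j : Fin d, ((K i j).factorial : ℚ)
      = ((d * m).factorial : ℚ) / (m.factorial : ℚ) ^ d
        * ∏ i : Fin d, (Nat.multinomial univ (K i) : ℚ) := by
    intro K hK
    have hrow : ∀ i : Fin d, (∏ j, ((K i j).factorial : ℚ))
        * (Nat.multinomial univ (K i) : ℚ) = (m.factorial : ℚ) := by
      intro i
      have := Nat.multinomial_spec (univ : Finset (Fin d)) (K i)
      rw [((hS K).1 hK).1 i] at this
      exact_mod_cast congrArg (Nat.cast : ℕ → ℚ) this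
    have hprod : (∏ i : Fin d, ∏ j : Fin d, ((K i j).factorial : ℚ))
        * ∏ i : Fin d, (Nat.multinomial univ (K i) : ℚ) = (m.factorial : ℚ) ^ d := by
      rw [← Finset.prod_mul_distrib]
      rw [Finset.prod_congr rfl fun i _ => hrow i]
      simp
    have hne : (∏ i : Fin d, ∏ j : Fin d, ((K i j).factorial : ℚ)) ≠ 0 := by
      apply Finset.prod_ne_zero_iff.2
      intro i _
      apply Finset.prod_ne_zero_iff.2
      intro j _
      exact Nat.cast_ne_zero.2 (Nat.factorial_ne_zero _)
    rw [div_mul_eq_mul_div, div_eq_div_iff hne (pow_ne_zero d hmfac)]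
    linear_combination (-((d * m).factorial : ℚ)) * hprod
  rw [Finset.sum_congr rfl hterm, ← Finset.mul_sum, aux_star d m S hS, hconst]
  rw [div_mul_div_comm, ← sq, ← sq, ← pow_mul, mul_comm d 2]
end

section
/- Let d ≥ 2. The subgroup N of ℤ^{2(d−1)} generated by the d^2 vectors h_{i,j} (i, j ∈ {1,…,d}) is exactly the set of vectors x = Σ_{i=1}^{d−1} a_i e_i + Σ_{j=1}^{d−1} b_j f_j with integer coordinates satisfying Σ_{i=1}^{d−1} a_i ≡ Σ_{j=1}^{d−1} b_j (mod d); in particular, N is a subgroup of index d in ℤ^{2(d−1)} (for d = 2 this is the index-2 sublattice {(a,b) : a + b even} of ℤ^2). -/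
/-- The vector `e_i ∈ ℤ^{2(d−1)}` (coordinates indexed by `Fin (d−1) ⊕ Fin (d−1)`): for
`i < d − 1` it is the `i`-th standard basis vector of the first block, and
`e_d = −(e_1 + ⋯ + e_{d−1})`. -/
def eVec (d : ℕ) (i : Fin d) : (Fin (d - 1) ⊕ Fin (d - 1)) → ℤ :=
  if h : (i : ℕ) < d - 1 then Pi.single (Sum.inl ⟨i, h⟩) 1
  else -∑ i' : Fin (d - 1), Pi.single (Sum.inl i') 1

/-- The vector `f_j ∈ ℤ^{2(d−1)}`: for `j < d − 1` it is the `j`-th standard basis vector of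
the second block, and `f_d = −(f_1 + ⋯ + f_{d−1})`. -/
def fVec (d : ℕ) (j : Fin d) : (Fin (d - 1) ⊕ Fin (d - 1)) → ℤ :=
  if h : (j : ℕ) < d - 1 then Pi.single (Sum.inr ⟨j, h⟩) 1
  else -∑ j' : Fin (d - 1), Pi.single (Sum.inr j') 1

/-- `h_{i,j} := e_i + f_j`. -/
def hVec (d : ℕ) (i j : Fin d) : (Fin (d - 1) ⊕ Fin (d - 1)) → ℤ :=
  eVec d i + fVec d j

namespace Statement7Aux

variable (d : ℕ)

/-- The "signature" function: first-block sum minus second-block sum. -/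
def Sfun (x : (Fin (d - 1) ⊕ Fin (d - 1)) → ℤ) : ℤ :=
  (∑ i : Fin (d - 1), x (Sum.inl i)) - ∑ j : Fin (d - 1), x (Sum.inr j)

lemma Sfun_add (x y : (Fin (d - 1) ⊕ Fin (d - 1)) → ℤ) :
    Sfun d (x + y) = Sfun d x + Sfun d y := by
  simp [Sfun, Finset.sum_add_distrib]; ring

lemma Sfun_neg (x : (Fin (d - 1) ⊕ Fin (d - 1)) → ℤ) :
    Sfun d (-x) = -Sfun d x := by
  simp [Sfun]; ring

lemma Sfun_zero : Sfun d (0 : (Fin (d - 1) ⊕ Fin (d - 1)) → ℤ) = 0 := by simp [Sfun]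

lemma Sfun_zsmul (n : ℤ) (x : (Fin (d - 1) ⊕ Fin (d - 1)) → ℤ) :
    Sfun d (n • x) = n * Sfun d x := by
  simp [Sfun, ← Finset.sum_sub_distrib, Finset.mul_sum, mul_sub]

lemma Sfun_single_inl (i : Fin (d - 1)) :
    Sfun d (Pi.single (Sum.inl i) 1) = 1 := by
  simp [Sfun, Pi.single_apply]

lemma Sfun_single_inr (j : Fin (d - 1)) :
    Sfun d (Pi.single (Sum.inr j) 1) = -1 := by
  simp [Sfun, Pi.single_apply]

lemma Sfun_eVec (i : Fin d) :
    Sfun d (eVec d i) = if (i : ℕ) < d - 1 then 1 else -((d : ℤ) - 1) := by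
  by_cases h : (i : ℕ) < d - 1 <;>
    simp [eVec, h, Sfun, Pi.single_apply, Finset.sum_apply] <;> omega

lemma Sfun_fVec (j : Fin d) :
    Sfun d (fVec d j) = if (j : ℕ) < d - 1 then -1 else (d : ℤ) - 1 := by
  by_cases h : (j : ℕ) < d - 1 <;>
    simp [fVec, h, Sfun, Pi.single_apply, Finset.sum_apply] <;> omega

lemma Sfun_hVec (i j : Fin d) : (d : ℤ) ∣ Sfun d (hVec d i j) := by
  rw [hVec, Sfun_add, Sfun_eVec, Sfun_fVec]
  by_cases hi : (i : ℕ) < d - 1 <;> by_cases hj : (j : ℕ) < d - 1 <;>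
      simp only [hi, hj, if_true, if_false]
  · exact ⟨0, by ring⟩
  · exact ⟨1, by ring⟩
  · exact ⟨-1, by ring⟩
  · exact ⟨0, by ring⟩

end Statement7Aux

open Statement7Aux

/-- For `d ≥ 2`, the subgroup `N` of `ℤ^{2(d−1)}` generated by the `d²`
vectors `h_{i,j}` is exactly the set of vectors whose first-block coordinate sum is congruent
to the second-block coordinate sum modulo `d`; in particular `N` has index `d` in
`ℤ^{2(d−1)}`. -/
theorem statement7 (d : ℕ) (hd : 2 ≤ d)
    (N : AddSubgroup ((Fin (d - 1) ⊕ Fin (d - 1)) → ℤ))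
    (hN : N = AddSubgroup.closure (Set.range fun p : Fin d × Fin d => hVec d p.1 p.2)) :
    (∀ x : (Fin (d - 1) ⊕ Fin (d - 1)) → ℤ,
      x ∈ N ↔ (d : ℤ) ∣
        ((∑ i : Fin (d - 1), x (Sum.inl i)) - ∑ j : Fin (d - 1), x (Sum.inr j))) ∧
    N.index = d := by
  subst hN
  set R : Set ((Fin (d - 1) ⊕ Fin (d - 1)) → ℤ) :=
    Set.range fun p : Fin d × Fin d => hVec d p.1 p.2 with hR
  have hd1 : 0 < d - 1 := by omega
  set z : Fin (d - 1) := ⟨0, hd1⟩ with hz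
  set c : Fin (d - 1) → Fin d := fun i => ⟨(i : ℕ), by omega⟩ with hc
  set lst : Fin d := ⟨d - 1, by omega⟩ with hlst
  have hmem : ∀ i j : Fin d, hVec d i j ∈ AddSubgroup.closure R :=
    fun i j => AddSubgroup.subset_closure ⟨(i, j), rfl⟩
  have heC : ∀ i : Fin (d - 1), eVec d (c i) = Pi.single (Sum.inl i) 1 := by
    intro i; simp [eVec, c, i.isLt]
  have hfC : ∀ j : Fin (d - 1), fVec d (c j) = Pi.single (Sum.inr j) 1 := by
    intro j; simp [fVec, c, j.isLt]
  have hfL : fVec d lst = -∑ j' : Fin (d - 1), Pi.single (Sum.inr j') 1 := by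
    simp [fVec, lst]
  -- e_i - e_z ∈ N
  have hE : ∀ i : Fin (d - 1),
      (Pi.single (Sum.inl i) 1 - Pi.single (Sum.inl z) 1 :
        (Fin (d - 1) ⊕ Fin (d - 1)) → ℤ) ∈ AddSubgroup.closure R := by
    intro i
    have h := sub_mem (hmem (c i) (c z)) (hmem (c z) (c z))
    have he : hVec d (c i) (c z) - hVec d (c z) (c z)
        = Pi.single (Sum.inl i) 1 - Pi.single (Sum.inl z) 1 := by
      simp [hVec, heC, hfC]
    rwa [he] at h
  have hF : ∀ j : Fin (d - 1),
      (Pi.single (Sum.inr j) 1 - Pi.single (Sum.inr z) 1 :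
        (Fin (d - 1) ⊕ Fin (d - 1)) → ℤ) ∈ AddSubgroup.closure R := by
    intro j
    have h := sub_mem (hmem (c z) (c j)) (hmem (c z) (c z))
    have he : hVec d (c z) (c j) - hVec d (c z) (c z)
        = Pi.single (Sum.inr j) 1 - Pi.single (Sum.inr z) 1 := by
      simp [hVec, heC, hfC]
    rwa [he] at h
  have hG0 : (Pi.single (Sum.inl z) 1 + Pi.single (Sum.inr z) 1 :
      (Fin (d - 1) ⊕ Fin (d - 1)) → ℤ) ∈ AddSubgroup.closure R := by
    have h := hmem (c z) (c z)
    rwa [hVec, heC, hfC] at h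
  -- d • f_z ∈ N
  have hD : ((d : ℤ) • Pi.single (Sum.inr z) 1 :
      (Fin (d - 1) ⊕ Fin (d - 1)) → ℤ) ∈ AddSubgroup.closure R := by
    set Fz : (Fin (d - 1) ⊕ Fin (d - 1)) → ℤ := Pi.single (Sum.inr z) 1 with hFz
    set T : (Fin (d - 1) ⊕ Fin (d - 1)) → ℤ :=
      ∑ j' : Fin (d - 1), Pi.single (Sum.inr j') 1 with hT
    have hA : (Fz + T : (Fin (d - 1) ⊕ Fin (d - 1)) → ℤ) ∈ AddSubgroup.closure R := by
      have h := sub_mem (hmem (c z) (c z)) (hmem (c z) lst)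
      have he : hVec d (c z) (c z) - hVec d (c z) lst = Fz + T := by
        simp [hVec, heC, hfC, hfL, hFz, hT]
      rwa [he] at h
    have hB : (∑ j : Fin (d - 1), (Fz - Pi.single (Sum.inr j) 1) :
        (Fin (d - 1) ⊕ Fin (d - 1)) → ℤ) ∈ AddSubgroup.closure R := by
      refine sum_mem fun j _ => ?_
      have := neg_mem (hF j)
      rwa [neg_sub] at this
    have key : ((d : ℤ) • Fz : (Fin (d - 1) ⊕ Fin (d - 1)) → ℤ)
        = (Fz + T) + ∑ j : Fin (d - 1), (Fz - Pi.single (Sum.inr j) 1) := by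
      rw [Finset.sum_sub_distrib, Finset.sum_const, Finset.card_univ, Fintype.card_fin, ← hT]
      have hcast : (d : ℤ) • Fz = Fz + ((d - 1 : ℕ) : ℤ) • Fz := by
        have : (d : ℤ) = 1 + ((d - 1 : ℕ) : ℤ) := by push_cast; omega
        rw [this, add_smul, one_smul]
      rw [hcast, natCast_zsmul]
      abel
    rw [key]
    exact add_mem hA hB
  -- main membership characterization
  have hmain : ∀ x : (Fin (d - 1) ⊕ Fin (d - 1)) → ℤ,
      x ∈ AddSubgroup.closure R ↔ (d : ℤ) ∣ Sfun d x := by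
    intro x
    constructor
    · intro hx
      induction hx using AddSubgroup.closure_induction with
      | mem y hy => obtain ⟨⟨i, j⟩, rfl⟩ := hy; exact Sfun_hVec d i j
      | zero => rw [Sfun_zero]; exact dvd_zero _
      | add a b _ _ ha hb => rw [Sfun_add]; exact dvd_add ha hb
      | neg a _ ha => rw [Sfun_neg]; exact ha.neg_right
    · intro hx
      set a : Fin (d - 1) → ℤ := fun i => x (Sum.inl i) with ha
      set b : Fin (d - 1) → ℤ := fun j => x (Sum.inr j) with hb
      obtain ⟨k, hk⟩ : (d : ℤ) ∣ ((∑ j, b j) - ∑ i, a i) := by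
        have := hx.neg_right
        rwa [Sfun, neg_sub] at this
      have hxdecomp : x
          = (∑ i : Fin (d - 1), a i • (Pi.single (Sum.inl i) 1 - Pi.single (Sum.inl z) 1))
          + (∑ j : Fin (d - 1), b j • (Pi.single (Sum.inr j) 1 - Pi.single (Sum.inr z) 1))
          + (∑ i : Fin (d - 1), a i) • (Pi.single (Sum.inl z) 1 + Pi.single (Sum.inr z) 1)
          + k • ((d : ℤ) • Pi.single (Sum.inr z) 1) := by
        funext s
        cases s with
        | inl t =>
          simp [Pi.single_apply, Finset.sum_apply, mul_sub, Finset.sum_sub_distrib,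
            mul_ite, Finset.sum_ite_eq', ← Finset.sum_mul, ha]
        | inr t =>
          simp only [Pi.add_apply, Finset.sum_apply, Pi.smul_apply, Pi.sub_apply,
            Pi.single_apply, smul_eq_mul, mul_sub, Finset.sum_sub_distrib,
            Finset.sum_ite_eq', Finset.mem_univ, if_true, reduceCtorEq, if_false,
            Sum.inr.injEq, mul_zero, mul_ite, mul_one, Finset.sum_const_zero, ← Finset.sum_mul]
          by_cases ht : t = z <;> simp [ht, hb] <;> linarith [hk]
      rw [hxdecomp]
      exact add_mem (add_mem (add_mem
        (sum_mem fun i _ => zsmul_mem (hE i) _)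
        (sum_mem fun j _ => zsmul_mem (hF j) _))
        (zsmul_mem hG0 _)) (zsmul_mem hD k)
  refine ⟨fun x => hmain x, ?_⟩
  -- index computation
  set φ : ((Fin (d - 1) ⊕ Fin (d - 1)) → ℤ) →+ ZMod d :=
    { toFun := fun x => ((Sfun d x : ℤ) : ZMod d)
      map_zero' := by
        show ((Sfun d (0 : (Fin (d - 1) ⊕ Fin (d - 1)) → ℤ) : ℤ) : ZMod d) = 0
        rw [Sfun_zero]; simp
      map_add' := by
        intro x y
        show ((Sfun d (x + y) : ℤ) : ZMod d) = ((Sfun d x : ℤ) : ZMod d) + ((Sfun d y : ℤ) : ZMod d)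
        rw [Sfun_add]; push_cast; ring } with hφ
  have hkerφ : AddSubgroup.closure R = φ.ker := by
    ext x
    rw [hmain x, AddMonoidHom.mem_ker, hφ]
    exact (ZMod.intCast_zmod_eq_zero_iff_dvd _ d).symm
  have hsurj : φ.range = ⊤ := by
    rw [AddMonoidHom.range_eq_top]
    intro y
    obtain ⟨n, rfl⟩ := ZMod.intCast_surjective y
    refine ⟨n • Pi.single (Sum.inl z) 1, ?_⟩
    show ((Sfun d (n • Pi.single (Sum.inl z) 1) : ℤ) : ZMod d) = (n : ZMod d)
    rw [Sfun_zsmul, Sfun_single_inl, mul_one]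
  rw [hkerφ, AddSubgroup.index_ker, hsurj]
  have : Nat.card (⊤ : AddSubgroup (ZMod d)) = Nat.card (ZMod d) := AddSubgroup.card_top
  rw [this, Nat.card_zmod]
end
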